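/- If C is a complete admissible uniform clutter on the vertex set X, then the simplicial complex generated by the family {X \ F : F an edge of C} (the complex whose facets are the complements of the edges of C) is pure shellable. -/

import Mathlib

variable {V : Type} [Fintype V] [DecidableEq V]

/-- A clutter: a family of finsets (edges), none of which contains another. -/
def IsClutter (E : Set (Finset V)) : Prop :=
  ∀ e ∈ E, ∀ f ∈ E, e ⊆ f → e = f

/-- A vertex cover: a set of vertices meeting every edge. -/
def IsVertexCover (E : Set (Finset V)) (C : Finset V) : Prop :=
  ∀ e ∈ E, (e ∩ C).Nonempty

/-- A minimal vertex cover. -/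
def IsMinimalVertexCover (E : Set (Finset V)) (C : Finset V) : Prop :=
  IsVertexCover E C ∧ ∀ D ⊂ C, ¬ IsVertexCover E D

/-- The covering number: minimum cardinality of a vertex cover. -/
noncomputable def coveringNumber (E : Set (Finset V)) : ℕ :=
  sInf {n : ℕ | ∃ C : Finset V, IsVertexCover E C ∧ C.card = n}

/-- Unmixed: all minimal vertex covers have the same cardinality. -/
def Unmixed (E : Set (Finset V)) : Prop :=
  ∀ C D : Finset V, IsMinimalVertexCover E C → IsMinimalVertexCover E D →
    C.card = D.card

/-- A matching: a set of pairwise disjoint edges. -/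
def IsMatching (E : Set (Finset V)) (M : Finset (Finset V)) : Prop :=
  ↑M ⊆ E ∧ (M : Set (Finset V)).Pairwise Disjoint

/-- The König property: the maximum size of a matching equals the covering number. -/
def HasKonigProperty (E : Set (Finset V)) : Prop :=
  (∃ M : Finset (Finset V), IsMatching E M ∧ M.card = coveringNumber E) ∧
  ∀ M : Finset (Finset V), IsMatching E M → M.card ≤ coveringNumber E

/-- A perfect matching of König type: pairwise disjoint edges `em 0, …, em (g-1)`
whose union is the whole vertex set, where `g` is the covering number. -/
def IsPerfectMatchingKT (E : Set (Finset V)) {g : ℕ} (em : Fin g → Finset V) : Prop :=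
  (∀ i, em i ∈ E) ∧ (∀ i j, i ≠ j → Disjoint (em i) (em j)) ∧
  (∀ x : V, ∃ i, x ∈ em i) ∧ g = coveringNumber E

/-- An independent set: contains no edge. -/
def IsIndependentSet (E : Set (Finset V)) (F : Finset V) : Prop :=
  ∀ e ∈ E, ¬ e ⊆ F

/-- A facet of the independence complex: a maximal independent set. -/
def IsFacet (E : Set (Finset V)) (F : Finset V) : Prop :=
  IsIndependentSet E F ∧ ∀ G : Finset V, IsIndependentSet E G → F ⊆ G → F = G

/-- The set of facets of the independence complex of a clutter. -/
def cFacets (E : Set (Finset V)) : Set (Finset V) := {F | IsFacet E F}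

/-- `F : Fin s → Finset V` is a shelling order of the family of facets `Fac`. -/
def IsShelling {s : ℕ} (Fac : Set (Finset V)) (F : Fin s → Finset V) : Prop :=
  Function.Injective F ∧ (∀ G : Finset V, G ∈ Fac ↔ ∃ i, F i = G) ∧
  ∀ i j : Fin s, i < j →
    ∃ v ∈ F j \ F i, ∃ l : Fin s, l < j ∧ F j \ F l = {v}

/-- A family of facets is shellable if it admits a shelling order. -/
def Shellable (Fac : Set (Finset V)) : Prop :=
  ∃ (s : ℕ) (F : Fin s → Finset V), IsShelling Fac F

/-- A family of facets is pure if all its members have the same cardinality. -/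
def PureFamily (Fac : Set (Finset V)) : Prop :=
  ∀ F ∈ Fac, ∀ G ∈ Fac, F.card = G.card

/-- Pure shellable: pure and shellable. -/
def PureShellable (Fac : Set (Finset V)) : Prop :=
  PureFamily Fac ∧ Shellable Fac

/-- A free vertex: a vertex belonging to exactly one edge. -/
def HasFreeVertex (E : Set (Finset V)) : Prop :=
  ∃ x : V, ∃ e ∈ E, x ∈ e ∧ ∀ f ∈ E, x ∈ f → f = e

/-- A cycle of length `r`: `r` distinct vertices and `r` distinct edges such that each
of the vertices lies in exactly two of the edges and each of the edges contains exactly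
two of the vertices. -/
def HasCycleOfLength (E : Set (Finset V)) (r : ℕ) : Prop :=
  ∃ (v : Fin r → V) (f : Fin r → Finset V),
    Function.Injective v ∧ Function.Injective f ∧ (∀ j, f j ∈ E) ∧
    (∀ i : Fin r, (Finset.univ.filter (fun j => v i ∈ f j)).card = 2) ∧
    (∀ j : Fin r, (Finset.univ.filter (fun i => v i ∈ f j)).card = 2)

/-- A partition of the vertex set into finsets indexed by `Fin m`. -/
def IsPartitionF {m : ℕ} (P : Fin m → Finset V) : Prop :=
  (∀ i j, i ≠ j → Disjoint (P i) (P j)) ∧ ∀ x : V, ∃ i, x ∈ P i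

/-- An admissible set with respect to the color classes `Xc 0, …, Xc (d-1)` and the
matching classes `em 0, …, em (g-1)`: it meets each color class at most once, it meets
precisely the first `e.card` color classes, and the matching indices of its vertices
are nondecreasing along the color classes. -/
def IsAdmissibleSet {d g : ℕ} (Xc : Fin d → Finset V) (em : Fin g → Finset V)
    (e : Finset V) : Prop :=
  (∀ i, (e ∩ Xc i).card ≤ 1) ∧
  (∀ i : Fin d, ((i : ℕ) < e.card ↔ (e ∩ Xc i).Nonempty)) ∧
  (∀ (i i' : Fin d) (j j' : Fin g) (x y : V),
    x ∈ e ∩ Xc i → y ∈ e ∩ Xc i' → x ∈ em j → y ∈ em j' → i ≤ i' → j ≤ j')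

/-- An admissible clutter: the `em i` are admissible edges and all other edges are
admissible sets not contained in any `em i`. -/
def IsAdmissibleClutter {d g : ℕ} (Xc : Fin d → Finset V) (em : Fin g → Finset V)
    (E : Set (Finset V)) : Prop :=
  IsClutter E ∧ (∀ i, em i ∈ E) ∧ (∀ i, IsAdmissibleSet Xc em (em i)) ∧
  ∀ f ∈ E, (∀ i, f ≠ em i) → IsAdmissibleSet Xc em f ∧ ∀ i, ¬ f ⊆ em i

/-- The complete admissible clutter: the `em i` together with all maximal admissible
sets containing no `em i`. -/
def completeAdmissibleClutter {d g : ℕ} (Xc : Fin d → Finset V)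
    (em : Fin g → Finset V) : Set (Finset V) :=
  Set.range em ∪
    {e | IsAdmissibleSet Xc em e ∧ (∀ i, ¬ em i ⊆ e) ∧
      ∀ e', IsAdmissibleSet Xc em e' → e ⊆ e' → e = e'}

/-- The edge set of the complete admissible uniform clutter: all maximal admissible
sets. -/
def maxAdmissible {d g : ℕ} (Xc : Fin d → Finset V)
    (em : Fin g → Finset V) : Set (Finset V) :=
  {e | IsAdmissibleSet Xc em e ∧ ∀ e', IsAdmissibleSet Xc em e' → e ⊆ e' → e = e'}

set_option maxHeartbeats 1000000
set_option linter.unusedSectionVars false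

namespace CAUC

lemma part_unique {m : ℕ} {P : Fin m → Finset V}
    (hP : ∀ i j, i ≠ j → Disjoint (P i) (P j)) {x : V} {i j : Fin m}
    (hi : x ∈ P i) (hj : x ∈ P j) : i = j := by
  by_contra h
  exact Finset.disjoint_left.mp (hP i j h) hi hj

def edgeOf {d g : ℕ} (v : Fin g → Fin d → V) (f : Fin d → Fin g) : Finset V :=
  Finset.univ.image (fun j => v (f j) j)

section

variable {d g : ℕ} {Xc : Fin d → Finset V} {em : Fin g → Finset V}
  {v : Fin g → Fin d → V}

lemma v_mem (hv : ∀ i j, em i ∩ Xc j = {v i j}) (i : Fin g) (j : Fin d) :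
    v i j ∈ em i ∧ v i j ∈ Xc j := by
  have : v i j ∈ em i ∩ Xc j := by rw [hv]; exact Finset.mem_singleton_self _
  exact Finset.mem_inter.mp this

lemma v_inj (hXc : ∀ i j, i ≠ j → Disjoint (Xc i) (Xc j))
    (hem : ∀ i j, i ≠ j → Disjoint (em i) (em j))
    (hv : ∀ i j, em i ∩ Xc j = {v i j}) {i i' : Fin g} {j j' : Fin d}
    (h : v i j = v i' j') : i = i' ∧ j = j' := by
  exact ⟨part_unique hem (v_mem hv i j).1 (h ▸ (v_mem hv i' j').1),
    part_unique hXc (v_mem hv i j).2 (h ▸ (v_mem hv i' j').2)⟩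

lemma edgeOf_inter (hXc : ∀ i j, i ≠ j → Disjoint (Xc i) (Xc j))
    (hv : ∀ i j, em i ∩ Xc j = {v i j}) (f : Fin d → Fin g) (i : Fin d) :
    edgeOf v f ∩ Xc i = {v (f i) i} := by
  ext x
  simp only [edgeOf, Finset.mem_inter, Finset.mem_image, Finset.mem_univ, true_and,
    Finset.mem_singleton]
  constructor
  · rintro ⟨⟨j, rfl⟩, hx⟩
    have := part_unique hXc (v_mem hv (f j) j).2 hx
    subst this; rfl
  · rintro rfl
    exact ⟨⟨i, rfl⟩, (v_mem hv (f i) i).2⟩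

lemma edgeOf_card (hXc : ∀ i j, i ≠ j → Disjoint (Xc i) (Xc j))
    (hem : ∀ i j, i ≠ j → Disjoint (em i) (em j))
    (hv : ∀ i j, em i ∩ Xc j = {v i j}) (f : Fin d → Fin g) :
    (edgeOf v f).card = d := by
  rw [edgeOf, Finset.card_image_of_injective _ (fun j j' h => (v_inj hXc hem hv h).2),
    Finset.card_univ, Fintype.card_fin]

lemma edgeOf_adm (hXc : ∀ i j, i ≠ j → Disjoint (Xc i) (Xc j))
    (hem : ∀ i j, i ≠ j → Disjoint (em i) (em j))
    (hv : ∀ i j, em i ∩ Xc j = {v i j}) {f : Fin d → Fin g} (hf : Monotone f) :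
    IsAdmissibleSet Xc em (edgeOf v f) := by
  refine ⟨fun i => ?_, fun i => ?_, fun i i' j j' x y hx hy hxj hyj' hii' => ?_⟩
  · rw [edgeOf_inter hXc hv]; simp
  · rw [edgeOf_card hXc hem hv, edgeOf_inter hXc hv]
    simp [i.isLt]
  · rw [edgeOf_inter hXc hv, Finset.mem_singleton] at hx hy
    subst hx; subst hy
    have hj : j = f i := part_unique hem hxj (v_mem hv (f i) i).1
    have hj' : j' = f i' := part_unique hem hyj' (v_mem hv (f i') i').1
    rw [hj, hj']
    exact hf hii'

lemma adm_card_le (hXc2 : ∀ x : V, ∃ i, x ∈ Xc i) {e : Finset V}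
    (he : IsAdmissibleSet Xc em e) : e.card ≤ d := by
  classical
  choose cls hcls using hXc2
  have h1 : e.card = ∑ i : Fin d, (e.filter (fun x => cls x = i)).card :=
    Finset.card_eq_sum_card_fiberwise (fun x _ => Finset.mem_univ (cls x))
  have h2 : ∀ i : Fin d, (e.filter (fun x => cls x = i)).card ≤ 1 := by
    intro i
    refine le_trans (Finset.card_le_card ?_) (he.1 i)
    intro x hx
    rw [Finset.mem_filter] at hx
    exact Finset.mem_inter.mpr ⟨hx.1, hx.2 ▸ hcls x⟩
  calc e.card ≤ ∑ _i : Fin d, 1 := h1 ▸ Finset.sum_le_sum (fun i _ => h2 i)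
    _ = d := by simp

lemma max_adm_eq_edge (hXc : ∀ i j, i ≠ j → Disjoint (Xc i) (Xc j))
    (hXc2 : ∀ x : V, ∃ i, x ∈ Xc i)
    (hem : ∀ i j, i ≠ j → Disjoint (em i) (em j))
    (hem2 : ∀ x : V, ∃ i, x ∈ em i)
    (hv : ∀ i j, em i ∩ Xc j = {v i j}) (hg : 0 < g) {e : Finset V}
    (he : IsAdmissibleSet Xc em e)
    (hmax : ∀ e', IsAdmissibleSet Xc em e' → e ⊆ e' → e = e') :
    ∃ f : Fin d → Fin g, Monotone f ∧ e = edgeOf v f := by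
  classical
  choose idx hidx using hem2
  -- Step A : e.card = d
  have hcard : e.card = d := by
    by_contra hnee
    have hkd : e.card < d := lt_of_le_of_ne (adm_card_le hXc2 he) hnee
    obtain ⟨jn, hub⟩ : ∃ jn : Fin g, ∀ x ∈ e, idx x ≤ jn := by
      rcases e.eq_empty_or_nonempty with rfl | hne2
      · exact ⟨⟨0, hg⟩, by simp⟩
      · refine ⟨(e.image idx).max' (hne2.image idx), fun x hx => ?_⟩
        exact Finset.le_max' _ _ (Finset.mem_image_of_mem _ hx)
    have hwXc : v jn ⟨e.card, hkd⟩ ∈ Xc ⟨e.card, hkd⟩ := (v_mem hv _ _).2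
    have hwem : v jn ⟨e.card, hkd⟩ ∈ em jn := (v_mem hv _ _).1
    have heik : e ∩ Xc ⟨e.card, hkd⟩ = ∅ := by
      rw [← Finset.not_nonempty_iff_eq_empty]
      intro hne3
      have := (he.2.1 ⟨e.card, hkd⟩).mpr hne3
      simp at this
    have hwe : v jn ⟨e.card, hkd⟩ ∉ e := by
      intro hwe
      have : v jn ⟨e.card, hkd⟩ ∈ e ∩ Xc ⟨e.card, hkd⟩ := Finset.mem_inter.mpr ⟨hwe, hwXc⟩
      simp [heik] at this
    have hcard' : (insert (v jn ⟨e.card, hkd⟩) e).card = e.card + 1 :=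
      Finset.card_insert_of_notMem hwe
    have hinter : ∀ i : Fin d, i ≠ ⟨e.card, hkd⟩ →
        insert (v jn ⟨e.card, hkd⟩) e ∩ Xc i = e ∩ Xc i := by
      intro i hi
      rw [Finset.insert_inter_of_notMem]
      intro hwXci
      exact hi (part_unique hXc hwXci hwXc)
    have hinterik : insert (v jn ⟨e.card, hkd⟩) e ∩ Xc ⟨e.card, hkd⟩ =
        {v jn ⟨e.card, hkd⟩} := by
      rw [Finset.insert_inter_of_mem hwXc, heik]
      rfl
    have hadm' : IsAdmissibleSet Xc em (insert (v jn ⟨e.card, hkd⟩) e) := by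
      refine ⟨fun i => ?_, fun i => ?_, fun i i' j j' x y hx hy hxj hyj' hii' => ?_⟩
      · by_cases hi : i = ⟨e.card, hkd⟩
        · subst hi; rw [hinterik]; simp
        · rw [hinter i hi]; exact he.1 i
      · rw [hcard']
        by_cases hi : i = ⟨e.card, hkd⟩
        · subst hi
          rw [hinterik]
          simp only [Finset.singleton_nonempty, iff_true]
          exact Nat.lt_succ_self e.card
        · rw [hinter i hi, ← he.2.1 i]
          have : (i : ℕ) ≠ e.card := fun h => hi (Fin.ext h)
          omega
      · rw [Finset.mem_inter] at hx hy
        obtain ⟨hx1, hx2⟩ := hx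
        obtain ⟨hy1, hy2⟩ := hy
        rw [Finset.mem_insert] at hx1 hy1
        rcases hy1 with rfl | hy1
        · have hj' : j' = jn := part_unique hem hyj' hwem
          subst hj'
          rcases hx1 with rfl | hx1
          · exact le_of_eq (part_unique hem hxj hwem)
          · exact (part_unique hem hxj (hidx x)) ▸ hub x hx1
        · rcases hx1 with rfl | hx1
          · have hiik : i = ⟨e.card, hkd⟩ := part_unique hXc hx2 hwXc
            have h1 : (i' : ℕ) < e.card :=
              (he.2.1 i').mpr ⟨y, Finset.mem_inter.mpr ⟨hy1, hy2⟩⟩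
            have h2 : (i : ℕ) ≤ (i' : ℕ) := hii'
            have h3 : (i : ℕ) = e.card := by rw [hiik]
            omega
          · exact he.2.2 i i' j j' x y (Finset.mem_inter.mpr ⟨hx1, hx2⟩)
              (Finset.mem_inter.mpr ⟨hy1, hy2⟩) hxj hyj' hii'
    have h9 := congrArg Finset.card (hmax _ hadm' (Finset.subset_insert _ e))
    rw [hcard'] at h9
    omega
  -- Step B : build f
  have hne : ∀ i : Fin d, (e ∩ Xc i).Nonempty := fun i =>
    (he.2.1 i).mp (hcard ▸ i.isLt)
  choose xs hxs using hne
  have hxv : ∀ i : Fin d, xs i = v (idx (xs i)) i := by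
    intro i
    have : xs i ∈ em (idx (xs i)) ∩ Xc i :=
      Finset.mem_inter.mpr ⟨hidx (xs i), (Finset.mem_inter.mp (hxs i)).2⟩
    rw [hv] at this
    exact Finset.mem_singleton.mp this
  have hsub : edgeOf v (fun i => idx (xs i)) ⊆ e := by
    intro z hz
    rw [edgeOf, Finset.mem_image] at hz
    obtain ⟨i, _, rfl⟩ := hz
    exact (hxv i) ▸ (Finset.mem_inter.mp (hxs i)).1
  have heq : edgeOf v (fun i => idx (xs i)) = e :=
    Finset.eq_of_subset_of_card_le hsub (by rw [hcard, edgeOf_card hXc hem hv])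
  refine ⟨fun i => idx (xs i), ?_, heq.symm⟩
  intro i i' hii'
  exact he.2.2 i i' _ _ (xs i) (xs i') (hxs i) (hxs i')
    (hidx (xs i)) (hidx (xs i')) hii'


lemma edgeOf_injective (hXc : ∀ i j, i ≠ j → Disjoint (Xc i) (Xc j))
    (hem : ∀ i j, i ≠ j → Disjoint (em i) (em j))
    (hv : ∀ i j, em i ∩ Xc j = {v i j}) {f f' : Fin d → Fin g}
    (h : edgeOf v f = edgeOf v f') : f = f' := by
  funext i
  have h1 : v (f i) i ∈ edgeOf v f' ∩ Xc i := by
    rw [← h, edgeOf_inter hXc hv]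
    exact Finset.mem_singleton_self _
  rw [edgeOf_inter hXc hv] at h1
  exact (v_inj hXc hem hv (Finset.mem_singleton.mp h1)).1

end

lemma compl_sdiff (A B : Finset V) :
    (Finset.univ \ B) \ (Finset.univ \ A) = A \ B := by
  ext x
  simp [Finset.mem_sdiff]
  tauto

noncomputable instance lexLinearOrder (d g : ℕ) : LinearOrder (Lex (Fin d → Fin g)) :=
  @Pi.Lex.linearOrder (Fin d) (fun _ => Fin g) inferInstance
    (inferInstanceAs (WellFoundedLT (Fin d))) inferInstance

end CAUC


/-- The simplicial complex whose facets are the complements of the edges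
of a complete admissible uniform clutter is pure shellable. -/
theorem complete_admissible_uniform_complements_pure_shellable
    {d g : ℕ} (Xc : Fin d → Finset V) (em : Fin g → Finset V)
    (hXc : IsPartitionF Xc) (hem : IsPartitionF em)
    (hcompat : ∀ i j, (em i ∩ Xc j).card = 1) :
    PureShellable ((fun F => Finset.univ \ F) '' maxAdmissible Xc em) := by
  classical
  rcases Nat.eq_zero_or_pos g with hg | hg
  · -- g = 0 : V is empty
    subst hg
    haveI : IsEmpty V := ⟨fun x => by obtain ⟨i, _⟩ := hem.2 x; exact i.elim0⟩
    have hE : ∀ s : Finset V, s = ∅ := fun s =>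
      Finset.eq_empty_of_forall_notMem (fun x _ => (IsEmpty.false x).elim)
    have hadm : IsAdmissibleSet Xc em (∅ : Finset V) :=
      ⟨fun i => by simp, fun i => by simp, fun i i' j j' x y hx => by simp at hx⟩
    have hMA : maxAdmissible Xc em = {(∅ : Finset V)} := by
      ext e
      simp only [maxAdmissible, Set.mem_setOf_eq, Set.mem_singleton_iff]
      exact ⟨fun _ => hE e, fun h => h ▸ ⟨hadm, fun e' _ _ => (hE e').symm⟩⟩
    rw [hMA, Set.image_singleton]
    constructor
    · intro F hF G hG
      rw [Set.mem_singleton_iff] at hF hG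
      rw [hF, hG]
    · refine ⟨1, fun _ => Finset.univ \ ∅, fun a b _ => Subsingleton.elim a b, ?_, ?_⟩
      · intro G
        rw [Set.mem_singleton_iff]
        exact ⟨fun h => ⟨0, h.symm⟩, fun ⟨i, hi⟩ => hi.symm⟩
      · intro i j hij
        rw [Fin.lt_def] at hij
        have h1 := i.isLt
        have h2 := j.isLt
        omega
  · -- main case : g > 0
    choose vt hv using fun i j => Finset.card_eq_one.mp (hcompat i j)
    obtain ⟨hXcD, hXc2⟩ := hXc
    obtain ⟨hemD, hem2⟩ := hem
    have hMA : maxAdmissible Xc em =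
        {e | ∃ f : Fin d → Fin g, Monotone f ∧ e = CAUC.edgeOf vt f} := by
      ext e
      simp only [maxAdmissible, Set.mem_setOf_eq]
      constructor
      · intro h
        exact CAUC.max_adm_eq_edge hXcD hXc2 hemD hem2 hv hg h.1 h.2
      · rintro ⟨f, hf, rfl⟩
        refine ⟨CAUC.edgeOf_adm hXcD hemD hv hf, fun e' he' hsub => ?_⟩
        refine Finset.eq_of_subset_of_card_le hsub ?_
        rw [CAUC.edgeOf_card hXcD hemD hv]
        exact CAUC.adm_card_le hXc2 he'
    set M : Finset (Lex (Fin d → Fin g)) :=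
      (Finset.univ.filter (fun f : Fin d → Fin g => Monotone f)).map toLex.toEmbedding
      with hMdef
    have hMmem : ∀ x : Lex (Fin d → Fin g), x ∈ M ↔ Monotone (ofLex x) := by
      intro x
      rw [hMdef, Finset.mem_map_equiv]
      simp
    set φ := M.orderIsoOfFin rfl with hφ
    have hsdiff : ∀ A B : Finset V, (Finset.univ \ A) = (Finset.univ \ B) → A = B := by
      intro A B h
      have := congrArg (fun s => Finset.univ \ s) h
      simpa [Finset.sdiff_sdiff_eq_self (Finset.subset_univ _)] using this
    refine ⟨?_, M.card, fun i => Finset.univ \ CAUC.edgeOf vt (ofLex (φ i).1), ?_, ?_, ?_⟩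
    · -- purity
      intro F hF G hG
      obtain ⟨eF, heF, rfl⟩ := hF
      obtain ⟨eG, heG, rfl⟩ := hG
      rw [hMA] at heF heG
      obtain ⟨f1, -, rfl⟩ := heF
      obtain ⟨f2, -, rfl⟩ := heG
      simp only
      rw [Finset.card_sdiff_of_subset (Finset.subset_univ _), Finset.card_sdiff_of_subset (Finset.subset_univ _),
        CAUC.edgeOf_card hXcD hemD hv, CAUC.edgeOf_card hXcD hemD hv]
    · -- injectivity
      intro a b hab
      simp only at hab
      have h1 : CAUC.edgeOf vt (ofLex (φ a).1) = CAUC.edgeOf vt (ofLex (φ b).1) :=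
        hsdiff _ _ hab
      have h2 : (φ a).1 = (φ b).1 :=
        congrArg toLex (CAUC.edgeOf_injective hXcD hemD hv h1)
      exact φ.injective (Subtype.ext h2)
    · -- range
      intro G
      constructor
      · rintro ⟨e, he, rfl⟩
        rw [hMA] at he
        obtain ⟨f, hf, rfl⟩ := he
        have hm : toLex f ∈ M := (hMmem _).mpr (by simpa using hf)
        obtain ⟨i, hi⟩ := φ.surjective ⟨toLex f, hm⟩
        refine ⟨i, ?_⟩
        show Finset.univ \ CAUC.edgeOf vt (ofLex (φ i).1) = _
        rw [congrArg Subtype.val hi]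
        rfl
      · rintro ⟨i, rfl⟩
        refine ⟨CAUC.edgeOf vt (ofLex (φ i).1), ?_, rfl⟩
        rw [hMA]
        exact ⟨ofLex (φ i).1, (hMmem _).mp (φ i).2, rfl⟩
    · -- shelling condition
      intro i j hij
      have hmono_i : Monotone (ofLex (φ i).1) := (hMmem _).mp (φ i).2
      have hmono_j : Monotone (ofLex (φ j).1) := (hMmem _).mp (φ j).2
      have hlex : (φ i).1 < (φ j).1 := Subtype.coe_lt_coe.mpr (φ.lt_iff_lt.mpr hij)
      obtain ⟨i0, hbelow, hlt0⟩ := hlex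
      have hlt0' : ofLex (φ i).1 i0 < ofLex (φ j).1 i0 := hlt0
      have hbelow' : ∀ k : Fin d, k < i0 → ofLex (φ i).1 k = ofLex (φ j).1 k :=
        fun k hk => hbelow k hk
      have hne0 : ofLex (φ i).1 i0 ≠ ofLex (φ j).1 i0 := ne_of_lt hlt0'
      have hv0A : vt (ofLex (φ i).1 i0) i0 ∈ CAUC.edgeOf vt (ofLex (φ i).1) := by
        rw [CAUC.edgeOf, Finset.mem_image]
        exact ⟨i0, Finset.mem_univ _, rfl⟩
      have hv0B : vt (ofLex (φ i).1 i0) i0 ∉ CAUC.edgeOf vt (ofLex (φ j).1) := by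
        intro hmem
        have hmem2 : vt (ofLex (φ i).1 i0) i0 ∈ CAUC.edgeOf vt (ofLex (φ j).1) ∩ Xc i0 :=
          Finset.mem_inter.mpr ⟨hmem, (CAUC.v_mem hv _ _).2⟩
        rw [CAUC.edgeOf_inter hXcD hv, Finset.mem_singleton] at hmem2
        exact hne0 (CAUC.v_inj hXcD hemD hv hmem2).1
      refine ⟨vt (ofLex (φ i).1 i0) i0, ?_, ?_⟩
      · show _ ∈ (Finset.univ \ CAUC.edgeOf vt (ofLex (φ j).1)) \
          (Finset.univ \ CAUC.edgeOf vt (ofLex (φ i).1))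
        rw [CAUC.compl_sdiff]
        exact Finset.mem_sdiff.mpr ⟨hv0A, hv0B⟩
      · -- the earlier facet
        set c : Fin d → Fin g :=
          fun k => if k = i0 then ofLex (φ i).1 i0 else ofLex (φ j).1 k with hcdef
        have hcval : ∀ k : Fin d, k ≠ i0 → c k = ofLex (φ j).1 k := by
          intro k hk
          simp only [hcdef, if_neg hk]
        have hcval0 : c i0 = ofLex (φ i).1 i0 := by simp only [hcdef, if_pos rfl]
        have hcmono : Monotone c := by
          intro k k' hkk'
          by_cases hk : k = i0
          · by_cases hk' : k' = i0
            · rw [hk, hk']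
            · have h1 : i0 ≤ k' := by rw [← hk]; exact hkk'
              have hik' : i0 < k' := lt_of_le_of_ne h1 (fun h => hk' h.symm)
              rw [hk, hcval0, hcval k' hk']
              exact le_of_lt (lt_of_lt_of_le hlt0' (hmono_j (le_of_lt hik')))
          · by_cases hk' : k' = i0
            · have h1 : k ≤ i0 := by rw [← hk']; exact hkk'
              have hki : k < i0 := lt_of_le_of_ne h1 hk
              rw [hk', hcval k hk, hcval0, ← hbelow' k hki]
              exact hmono_i (le_of_lt hki)
            · rw [hcval k hk, hcval k' hk']
              exact hmono_j hkk'
        have hcb : toLex c < (φ j).1 := by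
          refine ⟨i0, fun k hk => ?_, ?_⟩
          · show c k = ofLex (φ j).1 k
            exact hcval k (ne_of_lt hk)
          · show c i0 < ofLex (φ j).1 i0
            rw [hcval0]
            exact hlt0'
        have hcM : toLex c ∈ M := (hMmem _).mpr (by simpa using hcmono)
        obtain ⟨l, hl⟩ := φ.surjective ⟨toLex c, hcM⟩
        have hlval : (φ l).1 = toLex c := congrArg Subtype.val hl
        have hlj : l < j := by
          apply φ.lt_iff_lt.mp
          apply Subtype.coe_lt_coe.mp
          rw [hlval]
          exact hcb
        refine ⟨l, hlj, ?_⟩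
        show (Finset.univ \ CAUC.edgeOf vt (ofLex (φ j).1)) \
          (Finset.univ \ CAUC.edgeOf vt (ofLex (φ l).1)) = _
        rw [CAUC.compl_sdiff, hlval]
        ext x
        simp only [Finset.mem_sdiff, Finset.mem_singleton]
        constructor
        · rintro ⟨hx1, hx2⟩
          rw [CAUC.edgeOf, Finset.mem_image] at hx1
          obtain ⟨k, -, rfl⟩ := hx1
          rcases eq_or_ne k i0 with rfl | hk
          · rw [show ofLex (toLex c) k = c k from rfl, hcval0]
          · exfalso
            apply hx2
            rw [CAUC.edgeOf, Finset.mem_image]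
            refine ⟨k, Finset.mem_univ _, ?_⟩
            rw [show ofLex (toLex c) k = c k from rfl, hcval k hk]
        · rintro rfl
          refine ⟨?_, hv0B⟩
          rw [CAUC.edgeOf, Finset.mem_image]
          refine ⟨i0, Finset.mem_univ _, ?_⟩
          rw [show ofLex (toLex c) i0 = c i0 from rfl, hcval0]
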